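/- arXiv:2603.27903 — 3 statements merged into one kernel-verified Lean document; each statement's English description precedes it below -/
import Mathlib

section
/- Let n ≥ 2 and let M be a symmetric linear endomorphism of the Euclidean space ℝⁿ with eigenvalues λ_1 < ⋯ < λ_n and orthonormal eigenvectors e_1, …, e_n. Let 1 ≤ k ≤ n − 1 and let c ∈ ℝ satisfy λ_k < c < λ_{k+1}. Then the sublevel set {x : ‖x‖ = 1 ∧ ⟪x, M x⟫ ≤ c}, with its subspace topology, is homotopy equivalent to the unit sphere S^{k−1} = {y ∈ ℝᵏ : ‖y‖ = 1} in the Euclidean space ℝᵏ. -/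
open RealInnerProductSpace

noncomputable def projLow (n k : ℕ) : EuclideanSpace ℝ (Fin n) →ₗ[ℝ] EuclideanSpace ℝ (Fin n) where
  toFun a := WithLp.toLp 2 (fun i => if i.1 < k then a i else 0)
  map_add' a b := by ext i; by_cases h : i.1 < k <;> simp [h, PiLp.add_apply]
  map_smul' r a := by ext i; by_cases h : i.1 < k <;> simp [h, PiLp.smul_apply]

noncomputable def incLow (n k : ℕ) : EuclideanSpace ℝ (Fin k) →ₗ[ℝ] EuclideanSpace ℝ (Fin n) where
  toFun y := WithLp.toLp 2 (fun (i : Fin n) => if h : i.1 < k then y ⟨i.1, h⟩ else 0)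
  map_add' a b := by ext i; by_cases h : i.1 < k <;> simp [h, PiLp.add_apply]
  map_smul' r a := by ext i; by_cases h : i.1 < k <;> simp [h, PiLp.smul_apply]

noncomputable def lowOf (n k : ℕ) (hkn : k ≤ n) : EuclideanSpace ℝ (Fin n) →ₗ[ℝ] EuclideanSpace ℝ (Fin k) where
  toFun a := WithLp.toLp 2 (fun j => a (Fin.castLE hkn j))
  map_add' a b := by ext j; simp [PiLp.add_apply]
  map_smul' r a := by ext j; simp [PiLp.smul_apply]

lemma normsq_eq (m : ℕ) (a : EuclideanSpace ℝ (Fin m)) : ‖a‖ ^ 2 = ∑ i, (a i) ^ 2 := by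
  rw [EuclideanSpace.norm_eq, Real.sq_sqrt (by positivity)]
  simp [sq_abs]

lemma sum_low (n k : ℕ) (hkn : k ≤ n) (F : Fin n → ℝ) (hF : ∀ i : Fin n, k ≤ i.1 → F i = 0) :
    ∑ i, F i = ∑ j : Fin k, F (Fin.castLE hkn j) := by
  classical
  set G : ℕ → ℝ := fun i => if h : i < n then F ⟨i, h⟩ else 0 with hGdef
  have h1 : ∑ i, F i = ∑ i ∈ Finset.range n, G i := by
    rw [← Fin.sum_univ_eq_sum_range]
    exact Finset.sum_congr rfl fun i _ => by simp [hGdef, i.2]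
  have h2 : ∑ j : Fin k, F (Fin.castLE hkn j) = ∑ i ∈ Finset.range k, G i := by
    rw [← Fin.sum_univ_eq_sum_range]
    refine Finset.sum_congr rfl fun j _ => ?_
    have hjn : (j : ℕ) < n := lt_of_lt_of_le j.2 hkn
    simp only [hGdef, dif_pos hjn]
    rfl
  rw [h1, h2]
  symm
  apply Finset.sum_subset (Finset.range_subset_range.2 hkn)
  intro i hi hik
  simp only [Finset.mem_range] at hi hik
  simp [hGdef, hi, hF ⟨i, hi⟩ (le_of_not_gt hik)]

lemma sum_lam_sub (n : ℕ) (lam : Fin n → ℝ) (c : ℝ) (a : EuclideanSpace ℝ (Fin n)) :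
    ∑ i, (lam i - c) * (a i) ^ 2 = (∑ i, lam i * (a i) ^ 2) - c * ‖a‖ ^ 2 := by
  rw [normsq_eq, Finset.mul_sum, ← Finset.sum_sub_distrib]
  exact Finset.sum_congr rfl fun i _ => by ring

lemma exists_low_coord (n k : ℕ) (lam : Fin n → ℝ) (c : ℝ)
    (hhigh : ∀ i : Fin n, k ≤ i.1 → c < lam i)
    (a : EuclideanSpace ℝ (Fin n)) (ha : ‖a‖ = 1) (hfa : ∑ i, lam i * (a i) ^ 2 ≤ c) :
    ∃ i : Fin n, i.1 < k ∧ a i ≠ 0 := by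
  by_contra hcon
  push_neg at hcon
  have hsum : ∑ i, (lam i - c) * (a i) ^ 2 ≤ 0 := by
    rw [sum_lam_sub, ha]
    nlinarith
  have hex : ∃ j : Fin n, a j ≠ 0 := by
    by_contra hz
    push_neg at hz
    have h0 : ∑ i, (a i) ^ 2 = (0 : ℝ) := by simp [hz]
    rw [← normsq_eq, ha] at h0
    norm_num at h0
  obtain ⟨j, hj⟩ := hex
  have hjk : k ≤ j.1 := by
    by_contra hlt
    exact hj (hcon j (lt_of_not_ge hlt))
  have hpos : 0 < ∑ i, (lam i - c) * (a i) ^ 2 := by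
    refine Finset.sum_pos' (fun i _ => ?_) ⟨j, Finset.mem_univ j, ?_⟩
    · rcases lt_or_ge i.1 k with hi | hi
      · simp [hcon i hi]
      · exact mul_nonneg (sub_nonneg.2 (hhigh i hi).le) (sq_nonneg _)
    · have h1 : 0 < lam j - c := sub_pos.2 (hhigh j hjk)
      have h2 : 0 < (a j) ^ 2 := by positivity
      exact mul_pos h1 h2
  linarith

lemma w_apply (n k : ℕ) (a : EuclideanSpace ℝ (Fin n)) (s : ℝ) (i : Fin n) :
    (projLow n k a + s • (a - projLow n k a)) i = if i.1 < k then a i else s * a i := by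
  by_cases h : i.1 < k <;>
    simp [projLow, h, PiLp.add_apply, PiLp.smul_apply, PiLp.sub_apply] <;> ring

lemma f_smul (n : ℕ) (lam : Fin n → ℝ) (r : ℝ) (a : EuclideanSpace ℝ (Fin n)) :
    ∑ i, lam i * ((r • a) i) ^ 2 = r ^ 2 * ∑ i, lam i * (a i) ^ 2 := by
  rw [Finset.mul_sum]
  exact Finset.sum_congr rfl fun i _ => by simp [PiLp.smul_apply]; ring

lemma w_ne_zero (n k : ℕ) (lam : Fin n → ℝ) (c : ℝ)
    (hhigh : ∀ i : Fin n, k ≤ i.1 → c < lam i)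
    (a : EuclideanSpace ℝ (Fin n)) (ha : ‖a‖ = 1) (hfa : ∑ i, lam i * (a i) ^ 2 ≤ c)
    (s : ℝ) : projLow n k a + s • (a - projLow n k a) ≠ 0 := by
  obtain ⟨i, hik, hai⟩ := exists_low_coord n k lam c hhigh a ha hfa
  intro h0
  apply hai
  have := congrFun (congrArg (fun v : EuclideanSpace ℝ (Fin n) => (v : Fin n → ℝ)) h0) i
  simpa [w_apply n k a s i, hik] using this

lemma w_f_le (n k : ℕ) (lam : Fin n → ℝ) (c : ℝ)
    (hhigh : ∀ i : Fin n, k ≤ i.1 → c < lam i)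
    (a : EuclideanSpace ℝ (Fin n)) (ha : ‖a‖ = 1) (hfa : ∑ i, lam i * (a i) ^ 2 ≤ c)
    (s : ℝ) (hs0 : 0 ≤ s) (hs1 : s ≤ 1) :
    ∑ i, lam i * ((projLow n k a + s • (a - projLow n k a)) i) ^ 2
      ≤ c * ‖projLow n k a + s • (a - projLow n k a)‖ ^ 2 := by
  set w := projLow n k a + s • (a - projLow n k a) with hw
  have key : ∑ i, (lam i - c) * (w i) ^ 2 ≤ 0 := by
    have step : ∀ i : Fin n, (lam i - c) * (w i) ^ 2 ≤ (lam i - c) * (a i) ^ 2 := by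
      intro i
      rw [hw, w_apply n k a s i]
      rcases lt_or_ge i.1 k with h | h
      · simp [h]
      · simp only [if_neg (not_lt.2 h)]
        have h1 : 0 ≤ lam i - c := sub_nonneg.2 (hhigh i h).le
        have hs2 : s ^ 2 ≤ 1 := by nlinarith
        have h2 : (s * a i) ^ 2 ≤ (a i) ^ 2 := by nlinarith [sq_nonneg (a i)]
        exact mul_le_mul_of_nonneg_left h2 h1
    calc ∑ i, (lam i - c) * (w i) ^ 2 ≤ ∑ i, (lam i - c) * (a i) ^ 2 :=
          Finset.sum_le_sum fun i _ => step i
      _ = (∑ i, lam i * (a i) ^ 2) - c * ‖a‖ ^ 2 := sum_lam_sub n lam c a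
      _ ≤ 0 := by rw [ha]; nlinarith
  have := sum_lam_sub n lam c w
  linarith

lemma normalized_mem (n k : ℕ) (lam : Fin n → ℝ) (c : ℝ)
    (hhigh : ∀ i : Fin n, k ≤ i.1 → c < lam i)
    (a : EuclideanSpace ℝ (Fin n)) (ha : ‖a‖ = 1) (hfa : ∑ i, lam i * (a i) ^ 2 ≤ c)
    (s : ℝ) (hs0 : 0 ≤ s) (hs1 : s ≤ 1) :
    ‖‖projLow n k a + s • (a - projLow n k a)‖⁻¹ • (projLow n k a + s • (a - projLow n k a))‖ = 1 ∧
    ∑ i, lam i * ((‖projLow n k a + s • (a - projLow n k a)‖⁻¹ •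
        (projLow n k a + s • (a - projLow n k a))) i) ^ 2 ≤ c := by
  set w := projLow n k a + s • (a - projLow n k a) with hwdef
  have hw : w ≠ 0 := w_ne_zero n k lam c hhigh a ha hfa s
  have hnorm : ‖w‖ ≠ 0 := norm_ne_zero_iff.2 hw
  have hnpos : (0:ℝ) < ‖w‖ := norm_pos_iff.2 hw
  refine ⟨norm_smul_inv_norm hw, ?_⟩
  rw [f_smul]
  have h1 : ∑ i, lam i * (w i) ^ 2 ≤ c * ‖w‖ ^ 2 := w_f_le n k lam c hhigh a ha hfa s hs0 hs1
  have h2 : (‖w‖⁻¹) ^ 2 * (c * ‖w‖ ^ 2) = c := by field_simp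
  nlinarith [sq_nonneg ‖w‖⁻¹, inv_pos.2 hnpos]

lemma inc_low_eq (n k : ℕ) (hkn : k ≤ n) (a : EuclideanSpace ℝ (Fin n)) :
    incLow n k (lowOf n k hkn a) = projLow n k a := by
  ext i
  by_cases h : i.1 < k
  · simp only [incLow, lowOf, projLow, LinearMap.coe_mk, AddHom.coe_mk, PiLp.toLp_apply, dif_pos h, if_pos h]
    rfl
  · simp [incLow, lowOf, projLow, h]

lemma low_inc_eq (n k : ℕ) (hkn : k ≤ n) (y : EuclideanSpace ℝ (Fin k)) :
    lowOf n k hkn (incLow n k y) = y := by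
  ext j
  have hj : (Fin.castLE hkn j).1 < k := j.2
  simp only [lowOf, incLow, LinearMap.coe_mk, AddHom.coe_mk, PiLp.toLp_apply, dif_pos hj]
  rfl

lemma norm_low_eq (n k : ℕ) (hkn : k ≤ n) (a : EuclideanSpace ℝ (Fin n)) :
    ‖lowOf n k hkn a‖ = ‖projLow n k a‖ := by
  have hsq : ‖lowOf n k hkn a‖ ^ 2 = ‖projLow n k a‖ ^ 2 := by
    rw [normsq_eq, normsq_eq,
      sum_low n k hkn (fun i => (projLow n k a i) ^ 2)
        (fun i hi => by simp [projLow, not_lt.2 hi])]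
    refine Finset.sum_congr rfl fun j _ => ?_
    have hj : (Fin.castLE hkn j).1 < k := j.2
    simp [lowOf, projLow, hj]
  rw [← Real.sqrt_sq (norm_nonneg (lowOf n k hkn a)),
    ← Real.sqrt_sq (norm_nonneg (projLow n k a)), hsq]

lemma norm_inc_eq (n k : ℕ) (hkn : k ≤ n) (y : EuclideanSpace ℝ (Fin k)) :
    ‖incLow n k y‖ = ‖y‖ := by
  have hsq : ‖(incLow n k y : EuclideanSpace ℝ (Fin n))‖ ^ 2 = ‖y‖ ^ 2 := by
    rw [normsq_eq, normsq_eq,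
      sum_low n k hkn (fun i => ((incLow n k y : EuclideanSpace ℝ (Fin n)) i) ^ 2)
        (fun i hi => by simp [incLow, not_lt.2 hi])]
    refine Finset.sum_congr rfl fun j _ => ?_
    have hj : (Fin.castLE hkn j).1 < k := j.2
    simp only [incLow, LinearMap.coe_mk, AddHom.coe_mk, PiLp.toLp_apply, dif_pos hj]
    congr 1
  rw [← Real.sqrt_sq (norm_nonneg _), ← Real.sqrt_sq (norm_nonneg y), hsq]

lemma f_inc_le (n k : ℕ) (hkn : k ≤ n) (lam : Fin n → ℝ) (c : ℝ)
    (hlow : ∀ i : Fin n, i.1 < k → lam i < c)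
    (y : EuclideanSpace ℝ (Fin k)) (hy : ‖y‖ = 1) :
    ∑ i, lam i * ((incLow n k y : EuclideanSpace ℝ (Fin n)) i) ^ 2 ≤ c := by
  rw [sum_low n k hkn _ (fun i hi => by simp [incLow, not_lt.2 hi])]
  have hy2 : ∑ j : Fin k, (y j) ^ 2 = 1 := by
    rw [← normsq_eq, hy]; norm_num
  calc ∑ j : Fin k, lam (Fin.castLE hkn j) *
          ((incLow n k y : EuclideanSpace ℝ (Fin n)) (Fin.castLE hkn j)) ^ 2
      ≤ ∑ j : Fin k, c * (y j) ^ 2 := by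
        refine Finset.sum_le_sum fun j _ => ?_
        have hj : (Fin.castLE hkn j).1 < k := j.2
        have heq : (incLow n k y : EuclideanSpace ℝ (Fin n)) (Fin.castLE hkn j) = y j := by
          simp only [incLow, LinearMap.coe_mk, AddHom.coe_mk, PiLp.toLp_apply, dif_pos hj]
          rfl
        rw [heq]
        exact mul_le_mul_of_nonneg_right (hlow _ hj).le (sq_nonneg _)
    _ = c := by rw [← Finset.mul_sum, hy2, mul_one]

theorem aux_equiv (n k : ℕ) (hk : 0 < k) (hkn : k < n) (lam : Fin n → ℝ) (c : ℝ)
    (hlow : ∀ i : Fin n, i.1 < k → lam i < c)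
    (hhigh : ∀ i : Fin n, k ≤ i.1 → c < lam i) :
    Nonempty (ContinuousMap.HomotopyEquiv
      {a : EuclideanSpace ℝ (Fin n) // ‖a‖ = 1 ∧ ∑ i, lam i * (a i) ^ 2 ≤ c}
      (Metric.sphere (0 : EuclideanSpace ℝ (Fin k)) 1)) := by
  classical
  have hkn' : k ≤ n := hkn.le
  set A := {a : EuclideanSpace ℝ (Fin n) // ‖a‖ = 1 ∧ ∑ i, lam i * (a i) ^ 2 ≤ c} with hA
  set S := Metric.sphere (0 : EuclideanSpace ℝ (Fin k)) 1 with hS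
  have hPc : Continuous (projLow n k) := (projLow n k).continuous_of_finiteDimensional
  have hIc : Continuous (incLow n k) := (incLow n k).continuous_of_finiteDimensional
  have hLc : Continuous (lowOf n k hkn') := (lowOf n k hkn').continuous_of_finiteDimensional
  -- low part nonzero
  have hLne : ∀ x : A, lowOf n k hkn' x.1 ≠ 0 := by
    intro x
    obtain ⟨i, hik, hai⟩ := exists_low_coord n k lam c hhigh x.1 x.2.1 x.2.2
    intro h0
    apply hai
    have := congrFun (congrArg (fun v : EuclideanSpace ℝ (Fin k) => (v : Fin k → ℝ)) h0) ⟨i.1, hik⟩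
    simpa only [lowOf, LinearMap.coe_mk, AddHom.coe_mk, PiLp.toLp_apply, Fin.castLE_mk, Fin.eta, WithLp.ofLp_zero, Pi.zero_apply] using this
  have hLnorm : ∀ x : A, ‖lowOf n k hkn' x.1‖ ≠ 0 := fun x => norm_ne_zero_iff.2 (hLne x)
  -- the map g : A → S
  have gmem : ∀ x : A, ‖lowOf n k hkn' x.1‖⁻¹ • lowOf n k hkn' x.1 ∈ S := by
    intro x
    rw [hS, mem_sphere_zero_iff_norm]
    exact norm_smul_inv_norm (hLne x)
  set g : A → S := fun x => ⟨‖lowOf n k hkn' x.1‖⁻¹ • lowOf n k hkn' x.1, gmem x⟩ with hg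
  have hgc : Continuous g := by
    apply Continuous.subtype_mk
    have hbase : Continuous fun x : A => lowOf n k hkn' x.1 := hLc.comp continuous_subtype_val
    exact (hbase.norm.inv₀ hLnorm).smul hbase
  -- the map j : S → A
  have jmem : ∀ y : S, ‖(incLow n k y.1 : EuclideanSpace ℝ (Fin n))‖ = 1 ∧
      ∑ i, lam i * ((incLow n k y.1 : EuclideanSpace ℝ (Fin n)) i) ^ 2 ≤ c := by
    intro y
    have hy : ‖y.1‖ = 1 := mem_sphere_zero_iff_norm.1 y.2
    exact ⟨by rw [norm_inc_eq n k hkn', hy], f_inc_le n k hkn' lam c hlow y.1 hy⟩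
  set j : S → A := fun y => ⟨incLow n k y.1, jmem y⟩ with hj
  have hjc : Continuous j :=
    Continuous.subtype_mk (hIc.comp continuous_subtype_val) _
  set gc : C(A, S) := ⟨g, hgc⟩ with hgcdef
  set jc : C(S, A) := ⟨j, hjc⟩ with hjcdef
  -- g ∘ j = id
  have hgj : gc.comp jc = ContinuousMap.id S := by
    refine ContinuousMap.ext fun y => Subtype.ext ?_
    show (g (j y)).1 = y.1
    have hy : ‖y.1‖ = 1 := mem_sphere_zero_iff_norm.1 y.2
    simp only [hg, hj, low_inc_eq n k hkn', hy, inv_one, one_smul]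
  -- homotopy from j ∘ g to id
  have wne : ∀ p : unitInterval × A,
      projLow n k p.2.1 + (p.1 : ℝ) • (p.2.1 - projLow n k p.2.1) ≠ 0 :=
    fun p => w_ne_zero n k lam c hhigh p.2.1 p.2.2.1 p.2.2.2 (p.1 : ℝ)
  have wnorm : ∀ p : unitInterval × A,
      ‖projLow n k p.2.1 + (p.1 : ℝ) • (p.2.1 - projLow n k p.2.1)‖ ≠ 0 :=
    fun p => norm_ne_zero_iff.2 (wne p)
  set Hfun : unitInterval × A → A := fun p =>
    ⟨‖projLow n k p.2.1 + (p.1 : ℝ) • (p.2.1 - projLow n k p.2.1)‖⁻¹ •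
        (projLow n k p.2.1 + (p.1 : ℝ) • (p.2.1 - projLow n k p.2.1)),
      normalized_mem n k lam c hhigh p.2.1 p.2.2.1 p.2.2.2 (p.1 : ℝ) p.1.2.1 p.1.2.2⟩ with hHfun
  have hHc : Continuous Hfun := by
    apply Continuous.subtype_mk
    have ha : Continuous fun p : unitInterval × A => (p.2.1 : EuclideanSpace ℝ (Fin n)) :=
      continuous_subtype_val.comp continuous_snd
    have ht : Continuous fun p : unitInterval × A => (p.1 : ℝ) :=
      continuous_subtype_val.comp continuous_fst
    have hw : Continuous fun p : unitInterval × A =>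
        projLow n k p.2.1 + (p.1 : ℝ) • (p.2.1 - projLow n k p.2.1) :=
      (hPc.comp ha).add (ht.smul (ha.sub (hPc.comp ha)))
    exact (hw.norm.inv₀ wnorm).smul hw
  have Hhomotopy : (jc.comp gc).Homotopy (ContinuousMap.id A) := by
    refine ⟨⟨Hfun, hHc⟩, ?_, ?_⟩
    · intro x
      apply Subtype.ext
      show ‖projLow n k x.1 + ((0 : unitInterval) : ℝ) • (x.1 - projLow n k x.1)‖⁻¹ •
          (projLow n k x.1 + ((0 : unitInterval) : ℝ) • (x.1 - projLow n k x.1)) = (j (g x)).1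
      have h0 : projLow n k x.1 + ((0 : unitInterval) : ℝ) • (x.1 - projLow n k x.1)
          = projLow n k x.1 := by
        norm_num
      rw [h0]
      show ‖projLow n k x.1‖⁻¹ • projLow n k x.1
          = incLow n k (‖lowOf n k hkn' x.1‖⁻¹ • lowOf n k hkn' x.1)
      rw [map_smul, inc_low_eq n k hkn', norm_low_eq n k hkn']
    · intro x
      apply Subtype.ext
      show ‖projLow n k x.1 + ((1 : unitInterval) : ℝ) • (x.1 - projLow n k x.1)‖⁻¹ •
          (projLow n k x.1 + ((1 : unitInterval) : ℝ) • (x.1 - projLow n k x.1)) = x.1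
      have h1 : projLow n k x.1 + ((1 : unitInterval) : ℝ) • (x.1 - projLow n k x.1) = x.1 := by
        norm_num
      rw [h1, x.2.1, inv_one, one_smul]
  exact ⟨⟨gc, jc, ⟨Hhomotopy⟩, hgj ▸ ContinuousMap.Homotopic.refl _⟩⟩

/-- For `λ_k < c < λ_{k+1}` (1-indexed; here `lam ⟨k-1⟩ < c < lam ⟨k⟩` with the
0-indexed eigenvalue sequence), the sublevel set `{x : ‖x‖ = 1 ∧ ⟪x, M x⟫ ≤ c}`
is homotopy equivalent to the unit sphere `S^{k-1} ⊆ ℝ^k`. -/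
theorem sublevel_homotopy_equiv_sphere (n : ℕ) (hn : 2 ≤ n)
    (M : EuclideanSpace ℝ (Fin n) →ₗ[ℝ] EuclideanSpace ℝ (Fin n))
    (hM : ∀ x y : EuclideanSpace ℝ (Fin n), ⟪M x, y⟫ = ⟪x, M y⟫)
    (lam : Fin n → ℝ) (hlam : StrictMono lam)
    (e : Fin n → EuclideanSpace ℝ (Fin n)) (he : Orthonormal ℝ e)
    (heig : ∀ i, M (e i) = lam i • e i)
    (k : ℕ) (hk1 : 1 ≤ k) (hk2 : k ≤ n - 1)
    (c : ℝ) (hc1 : lam ⟨k - 1, by omega⟩ < c) (hc2 : c < lam ⟨k, by omega⟩) :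
    Nonempty (ContinuousMap.HomotopyEquiv
      {x : EuclideanSpace ℝ (Fin n) // ‖x‖ = 1 ∧ ⟪x, M x⟫ ≤ c}
      (Metric.sphere (0 : EuclideanSpace ℝ (Fin k)) 1)) := by
  classical
  have hk0 : 0 < k := hk1
  have hknlt : k < n := by omega
  have hlow : ∀ i : Fin n, i.1 < k → lam i < c := by
    intro i hi
    have hle : i ≤ (⟨k - 1, by omega⟩ : Fin n) := by
      rw [Fin.le_def]; show (i : ℕ) ≤ k - 1; omega
    exact lt_of_le_of_lt (hlam.monotone hle) hc1
  have hhigh : ∀ i : Fin n, k ≤ i.1 → c < lam i := by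
    intro i hi
    have hle : (⟨k, by omega⟩ : Fin n) ≤ i := by
      rw [Fin.le_def]; exact hi
    exact lt_of_lt_of_le hc2 (hlam.monotone hle)
  -- orthonormal basis
  have : Nonempty (Fin n) := ⟨⟨0, by omega⟩⟩
  have hcard : Fintype.card (Fin n) = Module.finrank ℝ (EuclideanSpace ℝ (Fin n)) := by
    simp [finrank_euclideanSpace_fin]
  let b := basisOfOrthonormalOfCardEqFinrank he hcard
  have hb : ⇑b = e := coe_basisOfOrthonormalOfCardEqFinrank he hcard
  let ob := b.toOrthonormalBasis (by rwa [hb])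
  have hob : ⇑ob = e := by rw [Module.Basis.coe_toOrthonormalBasis, hb]
  have hquad : ∀ x : EuclideanSpace ℝ (Fin n),
      ⟪x, M x⟫ = ∑ i, lam i * (ob.repr x i) ^ 2 := by
    intro x
    have hMx : M x = ∑ i, (ob.repr x i * lam i) • e i := by
      conv_lhs => rw [← ob.sum_repr x]
      rw [map_sum]
      refine Finset.sum_congr rfl fun i _ => ?_
      rw [map_smul]
      have : ob i = e i := by rw [hob]
      rw [this, heig, smul_smul]
    rw [hMx, inner_sum]
    refine Finset.sum_congr rfl fun i _ => ?_
    rw [real_inner_smul_right]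
    have h1 : ⟪x, e i⟫ = ob.repr x i := by
      rw [real_inner_comm]
      rw [ob.repr_apply_apply]
      congr 1
      rw [hob]
    rw [h1]; ring
  have hiff : ∀ x : EuclideanSpace ℝ (Fin n),
      (‖x‖ = 1 ∧ ⟪x, M x⟫ ≤ c) ↔
      (‖(ob.repr x : EuclideanSpace ℝ (Fin n))‖ = 1 ∧
        ∑ i, lam i * ((ob.repr x : EuclideanSpace ℝ (Fin n)) i) ^ 2 ≤ c) := by
    intro x
    have hnorm : ‖(ob.repr x : EuclideanSpace ℝ (Fin n))‖ = ‖x‖ :=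
      ob.repr.norm_map x
    rw [hnorm, hquad x]
  obtain ⟨eqv⟩ := aux_equiv n k hk0 hknlt lam c hlow hhigh
  exact ⟨((ob.repr.toHomeomorph.subtype (q := fun a : EuclideanSpace ℝ (Fin n) =>
      ‖a‖ = 1 ∧ ∑ i, lam i * (a i) ^ 2 ≤ c) hiff).toHomotopyEquiv).trans eqv⟩
end

section
/- Let n ≥ 2 and let M be a symmetric linear endomorphism of the Euclidean space ℝⁿ with eigenvalues λ_1 < ⋯ < λ_n and orthonormal eigenvectors e_1, …, e_n. If λ_1 < c < λ_2, then the sublevel set {x : ‖x‖ = 1 ∧ ⟪x, M x⟫ ≤ c} has exactly two path-connected components, one containing e_1 and the other containing −e_1. -/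
open RealInnerProductSpace

/-- Auxiliary: joining a point of the sublevel set to an eigenvector `v` (with
eigenvalue `μ < c`) on whose side it lies, by normalizing the straight segment. -/
lemma sublevel_join_aux {n : ℕ}
    (M : EuclideanSpace ℝ (Fin n) →ₗ[ℝ] EuclideanSpace ℝ (Fin n))
    (hM : ∀ x y : EuclideanSpace ℝ (Fin n), ⟪M x, y⟫ = ⟪x, M y⟫)
    (c μ : ℝ) (hμ : μ < c)
    (v x : EuclideanSpace ℝ (Fin n)) (hv1 : ‖v‖ = 1) (hv2 : M v = μ • v)
    (hx1 : ‖x‖ = 1) (hx2 : ⟪x, M x⟫ ≤ c) (hvx : 0 < ⟪v, x⟫) :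
    JoinedIn {y : EuclideanSpace ℝ (Fin n) | ‖y‖ = 1 ∧ ⟪y, M y⟫ ≤ c} x v := by
  set L : ℝ → EuclideanSpace ℝ (Fin n) := fun t => (1 - t) • x + t • v with hLdef
  have hvv : ⟪v, v⟫ = 1 := by
    rw [real_inner_self_eq_norm_mul_norm, hv1]; ring
  have hxx : ⟪x, x⟫ = 1 := by
    rw [real_inner_self_eq_norm_mul_norm, hx1]; ring
  have h1 : ⟪x, M v⟫ = μ * ⟪v, x⟫ := by
    rw [hv2, real_inner_smul_right, real_inner_comm]
  have h2 : ⟪v, M x⟫ = μ * ⟪v, x⟫ := by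
    rw [← hM, hv2, real_inner_smul_left]
  have h3 : ⟪v, M v⟫ = μ := by
    rw [hv2, real_inner_smul_right, hvv]; ring
  have hcomm : ⟪x, v⟫ = ⟪v, x⟫ := real_inner_comm v x
  -- positivity of the v-coefficient along the segment
  have hpos : ∀ t : ℝ, 0 ≤ t → t ≤ 1 → 0 < ⟪v, L t⟫ := by
    intro t ht0 ht1
    have : ⟪v, L t⟫ = (1 - t) * ⟪v, x⟫ + t := by
      simp only [hLdef, inner_add_right, real_inner_smul_right, hvv]; ring
    rw [this]
    rcases eq_or_lt_of_le ht0 with h | h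
    · rw [← h]; linarith
    · nlinarith
  have hLne : ∀ t : ℝ, 0 ≤ t → t ≤ 1 → L t ≠ 0 := by
    intro t ht0 ht1 h
    have := hpos t ht0 ht1
    rw [h, inner_zero_right] at this
    exact lt_irrefl _ this
  -- quadratic form bound along the segment
  have hquad : ∀ t : ℝ, 0 ≤ t → t ≤ 1 → ⟪L t, M (L t)⟫ ≤ c * ‖L t‖ ^ 2 := by
    intro t ht0 ht1
    have e1 : ⟪L t, M (L t)⟫ =
        (1 - t) ^ 2 * ⟪x, M x⟫ + 2 * (1 - t) * t * (μ * ⟪v, x⟫) + t ^ 2 * μ := by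
      simp only [hLdef, map_add, map_smul, inner_add_left, inner_add_right,
        real_inner_smul_left, real_inner_smul_right, h1, h2, h3]
      ring
    have e2 : ‖L t‖ ^ 2 = (1 - t) ^ 2 + 2 * (1 - t) * t * ⟪v, x⟫ + t ^ 2 := by
      rw [← real_inner_self_eq_norm_sq]
      simp only [hLdef, inner_add_left, inner_add_right, real_inner_smul_left,
        real_inner_smul_right, hvv, hxx, hcomm]
      ring
    rw [e1, e2]
    nlinarith [sq_nonneg (1 - t), sq_nonneg t, mul_nonneg (mul_nonneg (sub_nonneg.2 ht1) ht0) (le_of_lt hvx)]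
  -- the path
  have hLc : Continuous L := by
    apply Continuous.add
    · exact (continuous_const.sub continuous_id).smul continuous_const
    · exact continuous_id.smul continuous_const
  have hγc : Continuous fun t : unitInterval => ‖L (t : ℝ)‖⁻¹ • L (t : ℝ) := by
    refine Continuous.smul (f := fun t : unitInterval => ‖L (t : ℝ)‖⁻¹)
      (g := fun t : unitInterval => L (t : ℝ)) ?_ ?_
    · exact ((hLc.comp continuous_subtype_val).norm).inv₀
        (fun t => norm_ne_zero_iff.2 (hLne t t.2.1 t.2.2))
    · exact hLc.comp continuous_subtype_val
  refine ⟨⟨⟨fun t => ‖L (t : ℝ)‖⁻¹ • L (t : ℝ), hγc⟩, ?_, ?_⟩, ?_⟩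
  · show ‖L 0‖⁻¹ • L 0 = x
    simp [hLdef, hx1]
  · show ‖L 1‖⁻¹ • L 1 = v
    simp [hLdef, hv1]
  · intro t
    have ht0 : (0 : ℝ) ≤ t := t.2.1
    have ht1 : (t : ℝ) ≤ 1 := t.2.2
    have hne := hLne t ht0 ht1
    have hnorm : ‖L (t : ℝ)‖ ≠ 0 := norm_ne_zero_iff.2 hne
    have hnn : (0 : ℝ) ≤ ‖L (t : ℝ)‖⁻¹ := inv_nonneg.2 (norm_nonneg _)
    constructor
    · show ‖‖L (t : ℝ)‖⁻¹ • L (t : ℝ)‖ = 1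
      rw [norm_smul, norm_inv, norm_norm, inv_mul_cancel₀ hnorm]
    · show ⟪‖L (t : ℝ)‖⁻¹ • L (t : ℝ), M (‖L (t : ℝ)‖⁻¹ • L (t : ℝ))⟫ ≤ c
      rw [map_smul, real_inner_smul_left, real_inner_smul_right]
      have := hquad t ht0 ht1
      calc ‖L (t : ℝ)‖⁻¹ * (‖L (t : ℝ)‖⁻¹ * ⟪L (t : ℝ), M (L (t : ℝ))⟫)
          ≤ ‖L (t : ℝ)‖⁻¹ * (‖L (t : ℝ)‖⁻¹ * (c * ‖L (t : ℝ)‖ ^ 2)) := by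
            apply mul_le_mul_of_nonneg_left (mul_le_mul_of_nonneg_left this hnn) hnn
        _ = c * (‖L (t : ℝ)‖⁻¹ * ‖L (t : ℝ)‖) ^ 2 := by ring
        _ = c := by rw [inv_mul_cancel₀ hnorm]; ring

/-- If `λ_1 < c < λ_2` (1-indexed; 0-indexed `lam 0 < c < lam 1`), the sublevel set
`{x : ‖x‖ = 1 ∧ ⟪x, M x⟫ ≤ c}` has exactly two path-connected components, one
containing `e 0` and the other containing `-e 0`. -/
theorem sublevel_two_path_components (n : ℕ) (hn : 2 ≤ n)
    (M : EuclideanSpace ℝ (Fin n) →ₗ[ℝ] EuclideanSpace ℝ (Fin n))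
    (hM : ∀ x y : EuclideanSpace ℝ (Fin n), ⟪M x, y⟫ = ⟪x, M y⟫)
    (lam : Fin n → ℝ) (hlam : StrictMono lam)
    (e : Fin n → EuclideanSpace ℝ (Fin n)) (he : Orthonormal ℝ e)
    (heig : ∀ i, M (e i) = lam i • e i)
    (c : ℝ) (hc1 : lam ⟨0, by omega⟩ < c) (hc2 : c < lam ⟨1, by omega⟩) :
    e ⟨0, by omega⟩ ∈ {x : EuclideanSpace ℝ (Fin n) | ‖x‖ = 1 ∧ ⟪x, M x⟫ ≤ c}
      ∧ -e ⟨0, by omega⟩ ∈ {x : EuclideanSpace ℝ (Fin n) | ‖x‖ = 1 ∧ ⟪x, M x⟫ ≤ c}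
      ∧ pathComponentIn
            {x : EuclideanSpace ℝ (Fin n) | ‖x‖ = 1 ∧ ⟪x, M x⟫ ≤ c} (e ⟨0, by omega⟩)
          ∪ pathComponentIn
            {x : EuclideanSpace ℝ (Fin n) | ‖x‖ = 1 ∧ ⟪x, M x⟫ ≤ c} (-e ⟨0, by omega⟩)
        = {x : EuclideanSpace ℝ (Fin n) | ‖x‖ = 1 ∧ ⟪x, M x⟫ ≤ c}
      ∧ Disjoint
          (pathComponentIn
            {x : EuclideanSpace ℝ (Fin n) | ‖x‖ = 1 ∧ ⟪x, M x⟫ ≤ c} (e ⟨0, by omega⟩))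
          (pathComponentIn
            {x : EuclideanSpace ℝ (Fin n) | ‖x‖ = 1 ∧ ⟪x, M x⟫ ≤ c} (-e ⟨0, by omega⟩)) := by
  have hn0 : 0 < n := by omega
  have hn1 : 1 < n := by omega
  set i0 : Fin n := ⟨0, by omega⟩ with hi0
  set i1 : Fin n := ⟨1, by omega⟩ with hi1
  set S : Set (EuclideanSpace ℝ (Fin n)) := {x | ‖x‖ = 1 ∧ ⟪x, M x⟫ ≤ c} with hS
  haveI : Nonempty (Fin n) := ⟨i0⟩
  -- e is an orthonormal basis
  have card_eq : Fintype.card (Fin n) = Module.finrank ℝ (EuclideanSpace ℝ (Fin n)) := by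
    simp [finrank_euclideanSpace]
  set ob := (basisOfOrthonormalOfCardEqFinrank he card_eq).toOrthonormalBasis
    (by rwa [coe_basisOfOrthonormalOfCardEqFinrank]) with hob
  have hobe : ∀ i, ob i = e i := by
    intro i
    rw [hob, Module.Basis.coe_toOrthonormalBasis, coe_basisOfOrthonormalOfCardEqFinrank]
  have parseval : ∀ x y : EuclideanSpace ℝ (Fin n),
      ∑ i, ⟪x, e i⟫ * ⟪e i, y⟫ = ⟪x, y⟫ := by
    intro x y
    rw [← ob.sum_inner_mul_inner x y]
    exact Finset.sum_congr rfl (fun i _ => by rw [hobe i])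
  -- the key coefficient never vanishes on S
  have nonvanish : ∀ x ∈ S, ⟪e i0, x⟫ ≠ 0 := by
    rintro x ⟨hx1, hx2⟩ h0
    have hsum1 : ∑ i, ⟪e i, x⟫ * ⟪e i, x⟫ = 1 := by
      have := parseval x x
      rw [real_inner_self_eq_norm_mul_norm, hx1, mul_one] at this
      rw [← this]
      exact Finset.sum_congr rfl (fun i _ => by rw [real_inner_comm x (e i)])
    have hfx : ⟪x, M x⟫ = ∑ i, lam i * (⟪e i, x⟫ * ⟪e i, x⟫) := by
      rw [← parseval x (M x)]
      refine Finset.sum_congr rfl (fun i _ => ?_)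
      rw [← hM, heig, real_inner_smul_left, real_inner_comm x (e i)]
      ring
    have hterm : ∀ i ∈ Finset.univ,
        lam i1 * (⟪e i, x⟫ * ⟪e i, x⟫) ≤ lam i * (⟪e i, x⟫ * ⟪e i, x⟫) := by
      intro i _
      by_cases hii : i = i0
      · rw [hii, h0]; ring_nf; exact le_refl _
      · have : i1 ≤ i := by
          rw [hi1]
          have : (i : ℕ) ≠ 0 := fun h => hii (by rw [hi0]; exact Fin.ext h)
          exact Fin.mk_le_of_le_val (by omega)
        exact mul_le_mul_of_nonneg_right (hlam.monotone this) (mul_self_nonneg _)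
    have : lam i1 ≤ ⟪x, M x⟫ := by
      calc lam i1 = ∑ i, lam i1 * (⟪e i, x⟫ * ⟪e i, x⟫) := by
            rw [← Finset.mul_sum, hsum1, mul_one]
        _ ≤ ∑ i, lam i * (⟪e i, x⟫ * ⟪e i, x⟫) := Finset.sum_le_sum hterm
        _ = ⟪x, M x⟫ := hfx.symm
    linarith
  have he0 : ‖e i0‖ = 1 := he.1 i0
  have hee : ⟪e i0, e i0⟫ = 1 := by
    rw [real_inner_self_eq_norm_mul_norm, he0]; ring
  have he0S : e i0 ∈ S := by
    refine ⟨he0, ?_⟩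
    rw [heig, real_inner_smul_right, hee]
    linarith
  have hne0S : -e i0 ∈ S := by
    refine ⟨by rw [norm_neg]; exact he0, ?_⟩
    rw [map_neg, inner_neg_neg, heig, real_inner_smul_right, hee]
    linarith
  have hmneg : M (-e i0) = lam i0 • (-e i0) := by rw [map_neg, heig, smul_neg]
  -- joins
  have hjoinpos : ∀ x ∈ S, 0 < ⟪e i0, x⟫ → JoinedIn S x (e i0) := by
    rintro x ⟨hx1, hx2⟩ hp
    exact sublevel_join_aux M hM c (lam i0) hc1 (e i0) x he0 (heig i0) hx1 hx2 hp
  have hjoinneg : ∀ x ∈ S, ⟪e i0, x⟫ < 0 → JoinedIn S x (-e i0) := by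
    rintro x ⟨hx1, hx2⟩ hp
    refine sublevel_join_aux M hM c (lam i0) hc1 (-e i0) x
      (by rw [norm_neg]; exact he0) hmneg hx1 hx2 ?_
    rw [inner_neg_left]; linarith
  refine ⟨he0S, hne0S, ?_, ?_⟩
  · -- union
    apply Set.Subset.antisymm
    · exact Set.union_subset pathComponentIn_subset pathComponentIn_subset
    · intro x hx
      rcases lt_or_gt_of_ne (nonvanish x hx) with h | h
      · exact Or.inr ((hjoinneg x hx h).symm)
      · exact Or.inl ((hjoinpos x hx h).symm)
  · -- disjointness
    rw [Set.disjoint_left]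
    intro x hx1 hx2
    have j1 : JoinedIn S (e i0) x := hx1
    have j2 : JoinedIn S (-e i0) x := hx2
    obtain ⟨γ, hγ⟩ := j1.trans j2.symm
    have hφc : Continuous fun t : unitInterval => ⟪e i0, γ t⟫ :=
      Continuous.inner continuous_const γ.continuous
    have h0' : ⟪e i0, γ 0⟫ = 1 := by rw [γ.source]; exact hee
    have h1' : ⟪e i0, γ 1⟫ = -1 := by rw [γ.target, inner_neg_right, hee]
    obtain ⟨t, ht⟩ := intermediate_value_univ (1 : unitInterval) (0 : unitInterval) hφc
      (show (0 : ℝ) ∈ Set.Icc ⟪e i0, γ 1⟫ ⟪e i0, γ 0⟫ by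
        rw [h0', h1']; constructor <;> norm_num)
    exact nonvanish (γ t) (hγ t) ht
end

section
/- Let a < b be real numbers and let ρ : ℝ → ℝ be continuous on [a, b] with ρ(λ) > 0 for all λ ∈ [a, b] and ∫_a^b ρ(λ) dλ = 1. Let F(x) = ∫_a^x ρ(λ) dλ, and for each integer n ≥ 2 and each 0 ≤ k ≤ n let γ_{n,k} ∈ [a, b] be the unique point with F(γ_{n,k}) = k/n (such points exist and are unique since F is a strictly increasing continuous bijection from [a, b] onto [0, 1]). Define the normalized spacings p_{n,k} = (γ_{n,k+1} − γ_{n,k})/(b − a) for 0 ≤ k ≤ n − 1 and the entropy H_n = −∑_{k=0}^{n−1} p_{n,k} log p_{n,k}. Then H_n − log(n(b − a)) converges, as n → ∞, to (b − a)⁻¹ ∫_a^b log(ρ(λ)) dλ. -/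
open MeasureTheory Filter

set_option maxHeartbeats 1000000 in
/-- Let `ρ` be a continuous positive probability density on `[a, b]`, with CDF `F`,
and let `γ n k` be the `k/n`-quantile of `ρ` for `0 ≤ k ≤ n`. Let
`p n k = (γ n (k+1) - γ n k)/(b - a)` be the normalized quantile spacings and
`H n = -∑_{k<n} p n k · log (p n k)` their Shannon entropy. Then
`H n - log (n (b - a)) → (b - a)⁻¹ ∫_a^b log (ρ λ) dλ` as `n → ∞`. -/
theorem entropy_of_quantile_spacings (a b : ℝ) (hab : a < b)
    (ρ : ℝ → ℝ)
    (hcont : ContinuousOn ρ (Set.Icc a b))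
    (hpos : ∀ l ∈ Set.Icc a b, 0 < ρ l)
    (hnorm : ∫ l in a..b, ρ l = 1)
    (F : ℝ → ℝ) (hF : ∀ x, F x = ∫ l in a..x, ρ l)
    (γ : ℕ → ℕ → ℝ)
    (hγmem : ∀ n, 2 ≤ n → ∀ k ≤ n, γ n k ∈ Set.Icc a b)
    (hγ : ∀ n, 2 ≤ n → ∀ k ≤ n, F (γ n k) = (k : ℝ) / n)
    (p : ℕ → ℕ → ℝ) (hp : ∀ n k, p n k = (γ n (k + 1) - γ n k) / (b - a))
    (H : ℕ → ℝ)
    (hH : ∀ n, H n = -∑ k ∈ Finset.range n, p n k * Real.log (p n k)) :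
    Tendsto (fun n : ℕ => H n - Real.log (n * (b - a))) atTop
      (nhds ((b - a)⁻¹ * ∫ l in a..b, Real.log (ρ l))) := by
  have hba : (0:ℝ) < b - a := sub_pos.2 hab
  have hane : a ∈ Set.Icc a b := ⟨le_refl a, hab.le⟩
  have hbne : b ∈ Set.Icc a b := ⟨hab.le, le_refl b⟩
  have hne : (Set.Icc a b).Nonempty := ⟨a, hane⟩
  obtain ⟨xm, hxm, hminOn⟩ := isCompact_Icc.exists_isMinOn hne hcont
  set m : ℝ := ρ xm with hm_def
  have hm : 0 < m := hpos xm hxm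
  have hmin : ∀ y ∈ Set.Icc a b, m ≤ ρ y := hminOn
  have hint : ∀ x ∈ Set.Icc a b, ∀ y ∈ Set.Icc a b, IntervalIntegrable ρ volume x y :=
    fun x hx y hy => (hcont.mono (Set.uIcc_subset_Icc hx hy)).intervalIntegrable
  have hlogcont : ContinuousOn (fun l => Real.log (ρ l)) (Set.Icc a b) :=
    Real.continuousOn_log.comp hcont (fun x hx => (hpos x hx).ne')
  have hlogint : ∀ x ∈ Set.Icc a b, ∀ y ∈ Set.Icc a b,
      IntervalIntegrable (fun l => Real.log (ρ l)) volume x y :=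
    fun x hx y hy => (hlogcont.mono (Set.uIcc_subset_Icc hx hy)).intervalIntegrable
  have hFd : ∀ x ∈ Set.Icc a b, ∀ y ∈ Set.Icc a b, F y - F x = ∫ l in x..y, ρ l := by
    intro x hx y hy
    rw [hF, hF]
    exact intervalIntegral.integral_interval_sub_left (hint a hane y hy) (hint a hane x hx)
  have hgap : ∀ x ∈ Set.Icc a b, ∀ y ∈ Set.Icc a b, x ≤ y → m * (y - x) ≤ F y - F x := by
    intro x hx y hy hxy
    rw [hFd x hx y hy]
    have h1 : ∫ _ in x..y, m ≤ ∫ l in x..y, ρ l :=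
      intervalIntegral.integral_mono_on hxy intervalIntegrable_const (hint x hx y hy)
        (fun t ht => hmin t ⟨hx.1.trans ht.1, ht.2.trans hy.2⟩)
    simpa [intervalIntegral.integral_const, smul_eq_mul, mul_comm] using h1
  have hmono : ∀ x ∈ Set.Icc a b, ∀ y ∈ Set.Icc a b, x ≤ y → F x ≤ F y := by
    intro x hx y hy hxy
    nlinarith [hgap x hx y hy hxy]
  have hinj : ∀ x ∈ Set.Icc a b, ∀ y ∈ Set.Icc a b, F x = F y → x = y := by
    intro x hx y hy hxy
    rcases le_total x y with h | h
    · nlinarith [hgap x hx y hy h]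
    · nlinarith [hgap y hy x hx h]
  have hγ0 : ∀ n, 2 ≤ n → γ n 0 = a := by
    intro n hn
    have h1 := hγ n hn 0 (by omega)
    have hFa : F a = 0 := by rw [hF]; simp
    refine hinj _ (hγmem n hn 0 (by omega)) a hane ?_
    rw [h1, hFa]; simp
  have hγn : ∀ n, 2 ≤ n → γ n n = b := by
    intro n hn
    have h1 := hγ n hn n (le_refl n)
    have hFb : F b = 1 := by rw [hF]; exact hnorm
    refine hinj _ (hγmem n hn n (le_refl n)) b hbne ?_
    rw [h1, hFb]
    have : (n:ℝ) ≠ 0 := by positivity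
    field_simp
  -- basic spacing facts
  have hΔint : ∀ n, 2 ≤ n → ∀ k < n, (∫ l in γ n k..γ n (k+1), ρ l) = 1 / n := by
    intro n hn k hk
    rw [← hFd _ (hγmem n hn k hk.le) _ (hγmem n hn (k+1) hk)]
    rw [hγ n hn (k+1) hk, hγ n hn k hk.le]
    have : (n:ℝ) ≠ 0 := by positivity
    field_simp
    push_cast; ring
  have hΔpos : ∀ n, 2 ≤ n → ∀ k < n, 0 < γ n (k+1) - γ n k := by
    intro n hn k hk
    by_contra h
    push_neg at h
    have h2 := hmono _ (hγmem n hn (k+1) hk) _ (hγmem n hn k hk.le) (by linarith)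
    rw [hγ n hn (k+1) hk, hγ n hn k hk.le] at h2
    have hn0 : (0:ℝ) < n := by positivity
    rw [div_le_div_iff₀ hn0 hn0] at h2
    push_cast at h2
    nlinarith
  have hΔle : ∀ n, 2 ≤ n → ∀ k < n, γ n (k+1) - γ n k ≤ 1 / (n * m) := by
    intro n hn k hk
    have h1 := hgap _ (hγmem n hn k hk.le) _ (hγmem n hn (k+1) hk) (by linarith [hΔpos n hn k hk])
    rw [hγ n hn (k+1) hk, hγ n hn k hk.le] at h1
    have hn0 : (0:ℝ) < n := by positivity
    have h2 : m * (γ n (k+1) - γ n k) ≤ 1 / n := by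
      have : ((k:ℝ)+1) / n - k / n = 1 / n := by field_simp; ring
      push_cast at h1 ⊢
      linarith [h1, this]
    rw [le_div_iff₀ (by positivity)]
    have h3 : (n:ℝ) * (1/n) = 1 := by field_simp
    nlinarith [mul_le_mul_of_nonneg_left h2 hn0.le, h3]
  have hsumΔ : ∀ n, 2 ≤ n → ∑ k ∈ Finset.range n, (γ n (k+1) - γ n k) = b - a := by
    intro n hn
    rw [Finset.sum_range_sub (γ n), hγ0 n hn, hγn n hn]
  -- key convergence of Riemann-type sums
  set S : ℕ → ℝ := fun n =>
    ∑ k ∈ Finset.range n, (γ n (k+1) - γ n k) * (-(Real.log (n * (γ n (k+1) - γ n k)))) with hS_def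
  have key : Tendsto S atTop (nhds (∫ l in a..b, Real.log (ρ l))) := by
    rw [Metric.tendsto_atTop]
    intro ε hε
    set ε' : ℝ := ε * m / (2 * (b - a)) with hε'_def
    have hε' : 0 < ε' := by positivity
    obtain ⟨δ, hδ, hδuc⟩ := Metric.uniformContinuousOn_iff.1
      (isCompact_Icc.uniformContinuousOn_of_continuous hcont) ε' hε'
    obtain ⟨N₀, hN₀⟩ := exists_nat_gt (1 / (m * δ))
    refine ⟨max 2 (N₀ + 1), fun n hn => ?_⟩
    have hn2 : 2 ≤ n := le_trans (le_max_left _ _) hn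
    have hnN : (N₀:ℝ) + 1 ≤ n := by
      have := le_trans (le_max_right 2 (N₀+1)) hn
      exact_mod_cast this
    have hn0 : (0:ℝ) < n := by positivity
    have hmesh : 1 / (n * m) < δ := by
      have h1 : 1 / (m * δ) < n := by linarith [hN₀]
      rw [div_lt_iff₀ (by positivity)] at h1 ⊢
      nlinarith
    -- split the integral
    have hsplit : (∫ l in a..b, Real.log (ρ l)) =
        ∑ k ∈ Finset.range n, ∫ l in γ n k..γ n (k+1), Real.log (ρ l) := by
      rw [intervalIntegral.sum_integral_adjacent_intervals
        (fun k hk => hlogint _ (hγmem n hn2 k hk.le) _ (hγmem n hn2 (k+1) hk)),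
        hγ0 n hn2, hγn n hn2]
    -- per-interval bound
    have hterm : ∀ k < n,
        |(γ n (k+1) - γ n k) * (-(Real.log (n * (γ n (k+1) - γ n k)))) -
          ∫ l in γ n k..γ n (k+1), Real.log (ρ l)| ≤
          ε' / m * (γ n (k+1) - γ n k) := by
      intro k hk
      set x₀ := γ n k
      set x₁ := γ n (k+1)
      have hx₀ : x₀ ∈ Set.Icc a b := hγmem n hn2 k hk.le
      have hx₁ : x₁ ∈ Set.Icc a b := hγmem n hn2 (k+1) hk
      have hΔp : 0 < x₁ - x₀ := hΔpos n hn2 k hk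
      set Δ : ℝ := x₁ - x₀ with hΔ_def
      have hJsub : Set.Icc x₀ x₁ ⊆ Set.Icc a b := Set.Icc_subset_Icc hx₀.1 hx₁.2
      have hJne : (Set.Icc x₀ x₁).Nonempty := Set.nonempty_Icc.2 (by linarith)
      obtain ⟨u, hu, huOn⟩ := isCompact_Icc.exists_isMinOn hJne (hcont.mono hJsub)
      obtain ⟨v, hv, hvOn⟩ := isCompact_Icc.exists_isMaxOn hJne (hcont.mono hJsub)
      have hu' : ∀ t ∈ Set.Icc x₀ x₁, ρ u ≤ ρ t := huOn
      have hv' : ∀ t ∈ Set.Icc x₀ x₁, ρ t ≤ ρ v := hvOn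
      have hum : 0 < ρ u := hpos u (hJsub hu)
      have hvm : 0 < ρ v := hpos v (hJsub hv)
      have hmu : m ≤ ρ u := hmin u (hJsub hu)
      -- bounds on 1/(n Δ)
      set c : ℝ := 1 / (n * Δ) with hc_def
      have hcpos : 0 < c := by positivity
      have hInt := hΔint n hn2 k hk
      have hc1 : ρ u ≤ c := by
        have h1 : ∫ _ in x₀..x₁, ρ u ≤ ∫ l in x₀..x₁, ρ l :=
          intervalIntegral.integral_mono_on (by linarith) intervalIntegrable_const
            (hint _ hx₀ _ hx₁) hu'
        rw [hInt, intervalIntegral.integral_const, smul_eq_mul] at h1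
        rw [hc_def, le_div_iff₀ (by positivity)]
        calc ρ u * (n * Δ) = n * (Δ * ρ u) := by ring
          _ ≤ n * (1/n) := by
              have := mul_le_mul_of_nonneg_left h1 hn0.le
              calc (n:ℝ) * (Δ * ρ u) = n * ((x₁ - x₀) * ρ u) := by rw [hΔ_def]
                _ ≤ n * (1/n) := by nlinarith [h1]
          _ = 1 := by field_simp
      have hc2 : c ≤ ρ v := by
        have h1 : (∫ l in x₀..x₁, ρ l) ≤ ∫ _ in x₀..x₁, ρ v :=
          intervalIntegral.integral_mono_on (by linarith) (hint _ hx₀ _ hx₁)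
            intervalIntegrable_const hv'
        rw [hInt, intervalIntegral.integral_const, smul_eq_mul] at h1
        rw [hc_def, div_le_iff₀ (by positivity)]
        calc (1:ℝ) = n * (1/n) := by field_simp
          _ ≤ n * ((x₁ - x₀) * ρ v) := by nlinarith [h1]
          _ = ρ v * (n * Δ) := by rw [hΔ_def]; ring
      -- oscillation bound
      have hosc : ρ v - ρ u ≤ ε' := by
        have hdist : dist u v < δ := by
          rw [Real.dist_eq]
          have h1 : |u - v| ≤ Δ := by
            rw [abs_sub_le_iff]
            constructor <;> [skip; skip] <;>
              · have := hu.1; have := hu.2; have := hv.1; have := hv.2; linarith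
          calc |u - v| ≤ Δ := h1
            _ ≤ 1 / (n * m) := hΔle n hn2 k hk
            _ < δ := hmesh
        have := hδuc u (hJsub hu) v (hJsub hv) hdist
        rw [Real.dist_eq] at this
        cases abs_lt.1 this with
        | intro h1 h2 => linarith
      -- pointwise log bound
      have hlogosc : Real.log (ρ v) - Real.log (ρ u) ≤ ε' / m := by
        have h1 : Real.log (ρ v) - Real.log (ρ u) = Real.log (ρ v / ρ u) :=
          (Real.log_div hvm.ne' hum.ne').symm
        have h2 : Real.log (ρ v / ρ u) ≤ ρ v / ρ u - 1 :=
          Real.log_le_sub_one_of_pos (by positivity)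
        have h3 : ρ v / ρ u - 1 = (ρ v - ρ u) / ρ u := by field_simp
        have h4 : (ρ v - ρ u) / ρ u ≤ (ρ v - ρ u) / m := by
          apply div_le_div_of_nonneg_left _ hm hmu
          · have := hu' v hv; linarith
        have h5 : (ρ v - ρ u) / m ≤ ε' / m := by gcongr
        rw [h1]
        linarith
      -- pointwise bound and integral estimate
      have hlogc : Real.log c = -(Real.log (n * Δ)) := by
        rw [hc_def, one_div, Real.log_inv]
      have hpt : ∀ x ∈ Set.uIoc x₀ x₁, ‖Real.log (ρ x) - Real.log c‖ ≤ ε' / m := by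
        intro x hx
        rw [Set.uIoc_of_le (by linarith : x₀ ≤ x₁)] at hx
        have hxJ : x ∈ Set.Icc x₀ x₁ := ⟨hx.1.le, hx.2⟩
        have hρx : 0 < ρ x := hpos x (hJsub hxJ)
        have h1 : Real.log (ρ u) ≤ Real.log (ρ x) := Real.log_le_log hum (hu' x hxJ)
        have h2 : Real.log (ρ x) ≤ Real.log (ρ v) := Real.log_le_log hρx (hv' x hxJ)
        have h3 : Real.log (ρ u) ≤ Real.log c := Real.log_le_log hum hc1
        have h4 : Real.log c ≤ Real.log (ρ v) := Real.log_le_log hcpos hc2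
        rw [Real.norm_eq_abs, abs_le]
        constructor <;> linarith
      have hib : ‖∫ x in x₀..x₁, (Real.log (ρ x) - Real.log c)‖ ≤ ε' / m * |x₁ - x₀| :=
        intervalIntegral.norm_integral_le_of_norm_le_const hpt
      have hsub : (∫ x in x₀..x₁, (Real.log (ρ x) - Real.log c)) =
          (∫ l in x₀..x₁, Real.log (ρ l)) - Δ * Real.log c := by
        rw [intervalIntegral.integral_sub (hlogint _ hx₀ _ hx₁) intervalIntegrable_const,
          intervalIntegral.integral_const, smul_eq_mul, hΔ_def, mul_comm]
      calc |Δ * (-(Real.log (↑n * Δ))) - ∫ l in x₀..x₁, Real.log (ρ l)|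
          = ‖∫ x in x₀..x₁, (Real.log (ρ x) - Real.log c)‖ := by
            rw [hsub, Real.norm_eq_abs, ← hlogc, abs_sub_comm]
        _ ≤ ε' / m * |x₁ - x₀| := hib
        _ = ε' / m * Δ := by rw [← hΔ_def, abs_of_pos hΔp]
    -- summation
    have hεhalf : ε' / m * (b - a) = ε / 2 := by
      rw [hε'_def]
      field_simp
    rw [Real.dist_eq]
    calc |S n - ∫ l in a..b, Real.log (ρ l)|
        = |∑ k ∈ Finset.range n,
            ((γ n (k+1) - γ n k) * (-(Real.log (n * (γ n (k+1) - γ n k)))) -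
              ∫ l in γ n k..γ n (k+1), Real.log (ρ l))| := by
          rw [hS_def, hsplit, ← Finset.sum_sub_distrib]
      _ ≤ ∑ k ∈ Finset.range n,
            |(γ n (k+1) - γ n k) * (-(Real.log (n * (γ n (k+1) - γ n k)))) -
              ∫ l in γ n k..γ n (k+1), Real.log (ρ l)| := Finset.abs_sum_le_sum_abs _ _
      _ ≤ ∑ k ∈ Finset.range n, ε' / m * (γ n (k+1) - γ n k) :=
          Finset.sum_le_sum (fun k hk => hterm k (Finset.mem_range.1 hk))
      _ = ε' / m * (b - a) := by rw [← Finset.mul_sum, hsumΔ n hn2]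
      _ = ε / 2 := hεhalf
      _ < ε := by linarith
  -- the eventual identity
  have heq : ∀ᶠ n in atTop, (b - a)⁻¹ * S n = H n - Real.log (n * (b - a)) := by
    filter_upwards [eventually_ge_atTop 2] with n hn2
    have hn0 : (0:ℝ) < n := by positivity
    have hppos : ∀ k < n, 0 < p n k := fun k hk => by
      rw [hp]; exact div_pos (hΔpos n hn2 k hk) hba
    have hsum1 : ∑ k ∈ Finset.range n, p n k = 1 := by
      simp only [hp]
      rw [← Finset.sum_div, hsumΔ n hn2, div_self hba.ne']
    have hlhs : (b - a)⁻¹ * S n =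
        ∑ k ∈ Finset.range n, p n k * (-(Real.log (n * (γ n (k+1) - γ n k)))) := by
      rw [hS_def, Finset.mul_sum]
      refine Finset.sum_congr rfl fun k hk => ?_
      rw [hp]
      ring
    have hrhs : H n - Real.log (n * (b - a)) =
        ∑ k ∈ Finset.range n, p n k * (-(Real.log (n * (γ n (k+1) - γ n k)))) := by
      rw [hH]
      have h1 : Real.log (n * (b - a)) = ∑ k ∈ Finset.range n, p n k * Real.log (n * (b - a)) := by
        rw [← Finset.sum_mul, hsum1, one_mul]
      rw [h1, ← Finset.sum_neg_distrib, ← Finset.sum_sub_distrib]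
      refine Finset.sum_congr rfl fun k hk => ?_
      have hpk := hppos k (Finset.mem_range.1 hk)
      have hmulp : p n k * ((n:ℝ) * (b - a)) = n * (γ n (k+1) - γ n k) := by
        rw [hp]
        field_simp
      have h2 : Real.log (n * (γ n (k+1) - γ n k)) =
          Real.log (p n k) + Real.log ((n:ℝ) * (b - a)) := by
        rw [← hmulp, Real.log_mul hpk.ne' (by positivity)]
      rw [h2]
      ring
    rw [hlhs, hrhs]
  exact Tendsto.congr' heq (key.const_mul ((b - a)⁻¹))
end
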